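/- (Remark 4, exponential decay: C_N has a well-separated mode.) Fix constants γ > 0, c > 0 and σ > 0, and for each integer N ≥ 1 define C_N(L) = L σ²/N + c e^{−γL} for positive integers L. For each N let L_0^{(N)} be a minimizer of C_N over the positive integers (a minimizer exists). If (L_N) is any sequence of positive integers with lim_{N→∞} C_N(L_N)/C_N(L_0^{(N)}) = 1, then lim_{N→∞} L_N / L_0^{(N)} = 1. -/

import Mathlib

open Filter

private lemma log_affine_div_tendsto (a b : ℝ) (ha : 0 < a) :
    Tendsto (fun t : ℝ => Real.log (a * t + b) / t) atTop (nhds 0) := by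
  have h1 : Tendsto (fun t : ℝ => a * t + b) atTop atTop :=
    tendsto_atTop_add_const_right _ b (tendsto_id.const_mul_atTop ha)
  have h2 : Tendsto (fun t : ℝ => Real.log (a * t + b) / (a * t + b)) atTop (nhds 0) :=
    (Real.isLittleO_log_id_atTop.tendsto_div_nhds_zero).comp h1
  have h3 : Tendsto (fun t : ℝ => (a * t + b) / t) atTop (nhds a) := by
    have h4 : Tendsto (fun t : ℝ => a + b / t) atTop (nhds (a + 0)) :=
      tendsto_const_nhds.add (tendsto_const_nhds.div_atTop tendsto_id)
    rw [add_zero] at h4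
    refine h4.congr' ?_
    filter_upwards [eventually_ne_atTop (0:ℝ)] with t ht
    field_simp
  have h5 := h2.mul h3
  rw [zero_mul] at h5
  refine h5.congr' ?_
  filter_upwards [eventually_ne_atTop (0:ℝ), h1.eventually_ne_atTop 0] with t ht hab
  field_simp

set_option maxHeartbeats 1000000 in
/-- Remark 4, exponential decay: `C_N` has a well-separated mode.
With `C_N(L) = L σ²/N + c e^{-γL}`, if `L_0^{(N)}` minimizes `C_N` over the positive
integers and `(L_N)` is a sequence of positive integers with
`C_N(L_N)/C_N(L_0^{(N)}) → 1`, then `L_N / L_0^{(N)} → 1`. -/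
theorem wellSeparatedMode_exponential (γ c σ : ℝ) (hγ : 0 < γ) (hc : 0 < c) (hσ : 0 < σ)
    (C : ℕ → ℕ → ℝ)
    (hC : ∀ N L : ℕ, C N L = (L : ℝ) * σ ^ 2 / (N : ℝ) + c * Real.exp (-γ * (L : ℝ)))
    (L0 : ℕ → ℕ)
    (hL0 : ∀ N ≥ 1, 1 ≤ L0 N ∧ ∀ L ≥ 1, C N (L0 N) ≤ C N L)
    (LN : ℕ → ℕ) (hLN : ∀ N, 1 ≤ LN N)
    (hlim : Tendsto (fun N => C N (LN N) / C N (L0 N)) atTop (nhds 1)) :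
    Tendsto (fun N => (LN N : ℝ) / (L0 N : ℝ)) atTop (nhds 1) := by
  have hσ2 : (0:ℝ) < σ ^ 2 := by positivity
  have hexpγ : Real.exp (-γ) < 1 := Real.exp_lt_one_iff.mpr (by linarith)
  have h1e : (0:ℝ) < 1 - Real.exp (-γ) := by linarith
  set K : ℝ := 1 / (1 - Real.exp (-γ)) with hKdef
  have hK : 0 < K := by positivity
  set u : ℕ → ℝ := fun N => Real.log N with hudef
  have hu : Tendsto u atTop atTop :=
    Real.tendsto_log_atTop.comp tendsto_natCast_atTop_atTop
  set r : ℕ → ℝ := fun N => C N (LN N) / C N (L0 N) with hrdef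
  set d1 : ℝ := Real.log (K * σ ^ 2 / c) with hd1
  set d2 : ℝ := Real.log (c * γ / σ ^ 2) with hd2
  set d3 : ℝ := Real.log (σ ^ 2 / c) with hd3
  set w : ℕ → ℝ := fun N => Real.log (r N * ((L0 N : ℝ) + K)) with hwdef
  have hCpos : ∀ N : ℕ, 1 ≤ N → ∀ L : ℕ, 0 < C N L := by
    intro N hN L
    have hNpos : (0:ℝ) < N := by exact_mod_cast hN
    rw [hC]
    positivity
  -- E1 : key inequality from minimality at L0+1
  have E1 : ∀ᶠ N in atTop, c * Real.exp (-γ * (L0 N : ℝ)) ≤ K * (σ ^ 2 / (N : ℝ)) := by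
    filter_upwards [eventually_ge_atTop 1] with N hN
    obtain ⟨h1, hmin⟩ := hL0 N hN
    have h := hmin (L0 N + 1) (by omega)
    rw [hC, hC] at h
    push_cast at h
    have hNpos : (0:ℝ) < N := by exact_mod_cast hN
    have hexp : Real.exp (-γ * ((L0 N : ℝ) + 1)) =
        Real.exp (-γ * (L0 N : ℝ)) * Real.exp (-γ) := by
      rw [← Real.exp_add]; ring_nf
    rw [hexp] at h
    have hsplit : ((L0 N : ℝ) + 1) * σ ^ 2 / (N : ℝ)
        = (L0 N : ℝ) * σ ^ 2 / (N : ℝ) + σ ^ 2 / (N : ℝ) := by ring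
    rw [hsplit] at h
    have key : c * Real.exp (-γ * (L0 N : ℝ)) * (1 - Real.exp (-γ)) ≤ σ ^ 2 / (N : ℝ) := by
      nlinarith [h]
    have hid : c * Real.exp (-γ * (L0 N : ℝ))
        = (c * Real.exp (-γ * (L0 N : ℝ)) * (1 - Real.exp (-γ))) * K := by
      rw [hKdef]; field_simp
    calc c * Real.exp (-γ * (L0 N : ℝ))
        = (c * Real.exp (-γ * (L0 N : ℝ)) * (1 - Real.exp (-γ))) * K := hid
      _ ≤ (σ ^ 2 / (N : ℝ)) * K := mul_le_mul_of_nonneg_right key hK.le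
      _ = K * (σ ^ 2 / (N : ℝ)) := mul_comm _ _
  -- E2/E3 : two-sided bound on C N (L0 N)
  have E2 : ∀ᶠ N in atTop, C N (L0 N) ≤ ((L0 N : ℝ) + K) * (σ ^ 2 / (N : ℝ)) := by
    filter_upwards [E1, eventually_ge_atTop 1] with N h1 hN
    have hNpos : (0:ℝ) < N := by exact_mod_cast hN
    rw [hC]
    have : ((L0 N : ℝ) + K) * (σ ^ 2 / (N : ℝ))
        = (L0 N : ℝ) * σ ^ 2 / (N : ℝ) + K * (σ ^ 2 / (N : ℝ)) := by ring
    rw [this]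
    linarith
  have E3 : ∀ᶠ N in atTop, (L0 N : ℝ) * (σ ^ 2 / (N : ℝ)) ≤ C N (L0 N) := by
    filter_upwards [eventually_ge_atTop 1] with N hN
    rw [hC]
    have h0 : (L0 N : ℝ) * (σ ^ 2 / (N : ℝ)) = (L0 N : ℝ) * σ ^ 2 / (N : ℝ) := by ring
    rw [h0]
    have := mul_pos hc (Real.exp_pos (-γ * (L0 N : ℝ)))
    linarith
  -- E4 : lower bound on L0
  have E4 : ∀ᶠ N in atTop, (u N - d1) / γ ≤ (L0 N : ℝ) := by
    filter_upwards [E1, eventually_ge_atTop 1] with N h1 hN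
    have hNpos : (0:ℝ) < N := by exact_mod_cast hN
    have hE : Real.exp (-γ * (L0 N : ℝ)) ≤ K * σ ^ 2 / c / (N : ℝ) := by
      rw [div_div]
      rw [le_div_iff₀ (by positivity)]
      calc Real.exp (-γ * (L0 N : ℝ)) * (c * (N:ℝ))
          = (c * Real.exp (-γ * (L0 N : ℝ))) * (N:ℝ) := by ring
        _ ≤ (K * (σ ^ 2 / (N:ℝ))) * (N:ℝ) := by
            exact mul_le_mul_of_nonneg_right h1 hNpos.le
        _ = K * σ ^ 2 := by field_simp
    have hlog : -γ * (L0 N : ℝ) ≤ d1 - u N := by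
      have := Real.log_le_log (Real.exp_pos _) hE
      rw [Real.log_exp] at this
      rwa [Real.log_div (by positivity) hNpos.ne'] at this
    rw [div_le_iff₀ hγ]
    nlinarith [hlog]
  -- E5 : upper bound on L0
  have E5 : ∀ᶠ N in atTop, (L0 N : ℝ) ≤ (d2 + u N) / γ + 1 + 1 / γ := by
    filter_upwards [hu.eventually_ge_atTop (γ - d2), eventually_ge_atTop 1, E3]
      with N hucond hN hE3
    have hNpos : (0:ℝ) < N := by exact_mod_cast hN
    obtain ⟨h1, hmin⟩ := hL0 N hN
    have hlogeq : Real.log (c * γ * (N : ℝ) / σ ^ 2) = d2 + u N := by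
      have : c * γ * (N : ℝ) / σ ^ 2 = (c * γ / σ ^ 2) * (N : ℝ) := by ring
      rw [this, Real.log_mul (by positivity) hNpos.ne']
    set x : ℝ := (d2 + u N) / γ with hx
    have hx1 : 1 ≤ x := by
      rw [hx, le_div_iff₀ hγ]; linarith
    set Ls : ℕ := ⌈x⌉₊ with hLs
    have hLs1 : 1 ≤ Ls := Nat.one_le_ceil_iff.mpr (by linarith)
    have hxle : x ≤ (Ls : ℝ) := Nat.le_ceil x
    have hLslt : (Ls : ℝ) < x + 1 := Nat.ceil_lt_add_one (by linarith)
    have hCLs : C N Ls ≤ (x + 1) * (σ ^ 2 / (N : ℝ)) + σ ^ 2 / (γ * (N : ℝ)) := by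
      rw [hC]
      have hexp1 : Real.exp (-γ * (Ls : ℝ)) ≤ Real.exp (-γ * x) :=
        Real.exp_le_exp.mpr (by nlinarith)
      have hexp2 : Real.exp (-γ * x) = σ ^ 2 / (c * γ * (N : ℝ)) := by
        have hγx : γ * x = d2 + u N := by rw [hx]; field_simp
        rw [show -γ * x = -(γ * x) by ring, hγx, ← hlogeq, Real.exp_neg,
          Real.exp_log (by positivity), inv_div]
      have hc1 : c * Real.exp (-γ * (Ls : ℝ)) ≤ σ ^ 2 / (γ * (N : ℝ)) := by
        calc c * Real.exp (-γ * (Ls : ℝ)) ≤ c * Real.exp (-γ * x) :=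
              mul_le_mul_of_nonneg_left hexp1 hc.le
          _ = c * (σ ^ 2 / (c * γ * (N : ℝ))) := by rw [hexp2]
          _ = σ ^ 2 / (γ * (N : ℝ)) := by field_simp
      have hc2 : (Ls : ℝ) * σ ^ 2 / (N : ℝ) ≤ (x + 1) * (σ ^ 2 / (N : ℝ)) := by
        rw [mul_div_assoc]
        exact mul_le_mul_of_nonneg_right hLslt.le (by positivity)
      linarith
    have hCmin := hmin Ls hLs1
    have : (L0 N : ℝ) * (σ ^ 2 / (N : ℝ)) ≤ (x + 1 + 1/γ) * (σ ^ 2 / (N : ℝ)) := by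
      have : (x + 1 + 1/γ) * (σ ^ 2 / (N : ℝ))
          = (x + 1) * (σ ^ 2 / (N : ℝ)) + σ ^ 2 / (γ * (N : ℝ)) := by
        field_simp
      rw [this]
      linarith
    have hfin : (L0 N : ℝ) ≤ x + 1 + 1/γ := by
      have hpos : (0:ℝ) < σ ^ 2 / (N : ℝ) := by positivity
      have this2 : (L0 N : ℝ) * (σ ^ 2 / (N : ℝ)) ≤ (x + 1 + 1/γ) * (σ ^ 2 / (N : ℝ)) := this
      rw [mul_comm ((L0 N : ℝ)) _, mul_comm (x + 1 + 1/γ) _] at this2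
      exact le_of_mul_le_mul_left this2 hpos
    rw [hx] at hfin
    linarith
  -- E6 : positivity of r and the exact identity C(LN) = r * C(L0)
  have E6 : ∀ᶠ N in atTop, 0 < r N ∧ C N (LN N) = r N * C N (L0 N) := by
    filter_upwards [eventually_ge_atTop 1] with N hN
    have ha := hCpos N hN (LN N)
    have hb := hCpos N hN (L0 N)
    exact ⟨div_pos ha hb, (div_mul_cancel₀ _ hb.ne').symm⟩
  -- E7 : upper bound on LN
  have E7 : ∀ᶠ N in atTop, (LN N : ℝ) ≤ r N * ((L0 N : ℝ) + K) := by
    filter_upwards [E2, E6, eventually_ge_atTop 1] with N h2 h6 hN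
    obtain ⟨hr, heq⟩ := h6
    have hNpos : (0:ℝ) < N := by exact_mod_cast hN
    have hstep : (LN N : ℝ) * (σ ^ 2 / (N : ℝ))
        ≤ (r N * ((L0 N : ℝ) + K)) * (σ ^ 2 / (N : ℝ)) := by
      have hcl : (LN N : ℝ) * (σ ^ 2 / (N : ℝ)) ≤ C N (LN N) := by
        rw [hC]
        have h0 : (LN N : ℝ) * (σ ^ 2 / (N : ℝ)) = (LN N : ℝ) * σ ^ 2 / (N : ℝ) := by ring
        rw [h0]
        have := mul_pos hc (Real.exp_pos (-γ * (LN N : ℝ)))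
        linarith
      calc (LN N : ℝ) * (σ ^ 2 / (N : ℝ)) ≤ C N (LN N) := hcl
        _ = r N * C N (L0 N) := heq
        _ ≤ r N * (((L0 N : ℝ) + K) * (σ ^ 2 / (N : ℝ))) :=
            mul_le_mul_of_nonneg_left h2 hr.le
        _ = (r N * ((L0 N : ℝ) + K)) * (σ ^ 2 / (N : ℝ)) := by ring
    rw [mul_comm ((LN N : ℝ)) _, mul_comm (r N * ((L0 N : ℝ) + K)) _] at hstep
    exact le_of_mul_le_mul_left hstep (by positivity)
  -- E8 : lower bound on LN
  have E8 : ∀ᶠ N in atTop, (u N - d3 - w N) / γ ≤ (LN N : ℝ) := by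
    filter_upwards [E2, E6, eventually_ge_atTop 1] with N h2 h6 hN
    obtain ⟨hr, heq⟩ := h6
    have hNpos : (0:ℝ) < N := by exact_mod_cast hN
    have hL0K : (0:ℝ) < (L0 N : ℝ) + K := by positivity
    have h1 : c * Real.exp (-γ * (LN N : ℝ)) ≤ r N * (((L0 N : ℝ) + K) * (σ ^ 2 / (N : ℝ))) := by
      have hcl : c * Real.exp (-γ * (LN N : ℝ)) ≤ C N (LN N) := by
        rw [hC]
        have : (0:ℝ) ≤ (LN N : ℝ) * σ ^ 2 / (N : ℝ) := by positivity
        linarith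
      calc c * Real.exp (-γ * (LN N : ℝ)) ≤ C N (LN N) := hcl
        _ = r N * C N (L0 N) := heq
        _ ≤ r N * (((L0 N : ℝ) + K) * (σ ^ 2 / (N : ℝ))) :=
            mul_le_mul_of_nonneg_left h2 hr.le
    have hE : Real.exp (-γ * (LN N : ℝ))
        ≤ (r N * ((L0 N : ℝ) + K)) * (σ ^ 2 / c / (N : ℝ)) := by
      rw [show (r N * ((L0 N : ℝ) + K)) * (σ ^ 2 / c / (N : ℝ))
          = (r N * (((L0 N : ℝ) + K) * (σ ^ 2 / (N : ℝ)))) / c by field_simp]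
      rw [le_div_iff₀ hc]
      nlinarith [h1]
    have hlogle := Real.log_le_log (Real.exp_pos _) hE
    rw [Real.log_exp, Real.log_mul (mul_pos hr hL0K).ne' (by positivity : (0:ℝ) < σ ^ 2 / c / (N:ℝ)).ne',
      Real.log_div (by positivity) hNpos.ne'] at hlogle
    have hw : w N = Real.log (r N * ((L0 N : ℝ) + K)) := rfl
    have hd3' : d3 = Real.log (σ ^ 2 / c) := hd3
    have huN : u N = Real.log (N : ℝ) := rfl
    rw [div_le_iff₀ hγ, hw, hd3', huN]
    linarith [hlogle]
  -- limit computations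
  have hlogr : Tendsto (fun N => Real.log (r N)) atTop (nhds 0) := by
    have := (Real.continuousAt_log one_ne_zero).tendsto.comp hlim
    simpa [Real.log_one, Function.comp_def] using this
  have hlogL0u : Tendsto (fun N => Real.log ((L0 N : ℝ) + K) / u N) atTop (nhds 0) := by
    set b0 : ℝ := d2 / γ + 1 + 1 / γ + K with hb0
    have hupper : Tendsto (fun N => Real.log ((1/γ) * u N + b0) / u N) atTop (nhds 0) :=
      (log_affine_div_tendsto (1/γ) b0 (by positivity)).comp hu
    refine tendsto_of_tendsto_of_tendsto_of_le_of_le' tendsto_const_nhds hupper ?_ ?_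
    · filter_upwards [eventually_ge_atTop 1, hu.eventually_gt_atTop 0] with N hN hup
      have hL1 : (1:ℝ) ≤ (L0 N : ℝ) := by exact_mod_cast (hL0 N hN).1
      have : (0:ℝ) ≤ Real.log ((L0 N : ℝ) + K) := Real.log_nonneg (by linarith)
      positivity
    · filter_upwards [E5, hu.eventually_gt_atTop 0, eventually_ge_atTop 1] with N h5 hup hN
      have hL1 : (1:ℝ) ≤ (L0 N : ℝ) := by exact_mod_cast (hL0 N hN).1
      have hle : (L0 N : ℝ) + K ≤ (1/γ) * u N + b0 := by
        have : (d2 + u N) / γ + 1 + 1/γ + K = (1/γ) * u N + b0 := by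
          rw [hb0]; field_simp; ring
        linarith [h5, this.le, this.ge]
      have hll := Real.log_le_log (by linarith) hle
      exact (div_le_div_iff_of_pos_right hup).mpr hll
  have hwu : Tendsto (fun N => w N / u N) atTop (nhds 0) := by
    have hsum := (hlogr.div_atTop hu).add hlogL0u
    rw [add_zero] at hsum
    refine hsum.congr' ?_
    filter_upwards [E6, eventually_ge_atTop 1] with N h6 hN
    obtain ⟨hr, _⟩ := h6
    have hmul : w N = Real.log (r N) + Real.log ((L0 N : ℝ) + K) :=
      Real.log_mul hr.ne' (by positivity)
    rw [hmul]; ring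
  -- L0 / log N → 1/γ
  have hA : Tendsto (fun N => (L0 N : ℝ) / u N) atTop (nhds (1/γ)) := by
    have hlow : Tendsto (fun N => ((u N - d1) / γ) / u N) atTop (nhds (1/γ)) := by
      have h0 : Tendsto (fun N => (1 - d1 / u N) / γ) atTop (nhds ((1 - 0) / γ)) :=
        (tendsto_const_nhds.sub (tendsto_const_nhds.div_atTop hu)).div_const γ
      rw [sub_zero] at h0
      refine h0.congr' ?_
      filter_upwards [hu.eventually_ne_atTop 0] with N hup
      field_simp
    have hhigh : Tendsto (fun N => ((d2 + u N) / γ + 1 + 1/γ) / u N) atTop (nhds (1/γ)) := by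
      have h0 : Tendsto (fun N => (d2 / u N + 1) / γ + (1 + 1/γ) / u N) atTop
          (nhds ((0 + 1) / γ + 0)) :=
        (((tendsto_const_nhds.div_atTop hu).add tendsto_const_nhds).div_const γ).add
          (tendsto_const_nhds.div_atTop hu)
      rw [show ((0:ℝ) + 1) / γ + 0 = 1/γ by ring] at h0
      refine h0.congr' ?_
      filter_upwards [hu.eventually_ne_atTop 0] with N hup
      field_simp
      ring
    refine tendsto_of_tendsto_of_tendsto_of_le_of_le' hlow hhigh ?_ ?_
    · filter_upwards [E4, hu.eventually_gt_atTop 0] with N h4 hup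
      exact (div_le_div_iff_of_pos_right hup).mpr h4
    · filter_upwards [E5, hu.eventually_gt_atTop 0] with N h5 hup
      exact (div_le_div_iff_of_pos_right hup).mpr h5
  -- LN / log N → 1/γ
  have hB : Tendsto (fun N => (LN N : ℝ) / u N) atTop (nhds (1/γ)) := by
    have hlow : Tendsto (fun N => ((u N - d3 - w N) / γ) / u N) atTop (nhds (1/γ)) := by
      have h0 : Tendsto (fun N => (1 - d3 / u N - w N / u N) / γ) atTop
          (nhds ((1 - 0 - 0) / γ)) :=
        ((tendsto_const_nhds.sub (tendsto_const_nhds.div_atTop hu)).sub hwu).div_const γ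
      rw [show ((1:ℝ) - 0 - 0) / γ = 1/γ by ring] at h0
      refine h0.congr' ?_
      filter_upwards [hu.eventually_ne_atTop 0] with N hup
      field_simp
    have hhigh : Tendsto (fun N => r N * ((L0 N : ℝ) / u N + K / u N)) atTop
        (nhds (1 * (1/γ + 0))) :=
      hlim.mul (hA.add (tendsto_const_nhds.div_atTop hu))
    rw [show (1:ℝ) * (1/γ + 0) = 1/γ by ring] at hhigh
    refine tendsto_of_tendsto_of_tendsto_of_le_of_le' hlow hhigh ?_ ?_
    · filter_upwards [E8, hu.eventually_gt_atTop 0] with N h8 hup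
      exact (div_le_div_iff_of_pos_right hup).mpr h8
    · filter_upwards [E7, hu.eventually_gt_atTop 0] with N h7 hup
      have h := (div_le_div_iff_of_pos_right hup).mpr h7
      refine le_trans h (le_of_eq ?_)
      field_simp
  -- conclusion
  have hfin := hB.div hA (by positivity : (1/γ:ℝ) ≠ 0)
  rw [div_self (by positivity : (1/γ:ℝ) ≠ 0)] at hfin
  refine hfin.congr' ?_
  filter_upwards [hu.eventually_ne_atTop 0, eventually_ge_atTop 1] with N hup hN
  have hL1 : (1:ℝ) ≤ (L0 N : ℝ) := by exact_mod_cast (hL0 N hN).1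
  have hL0ne : ((L0 N : ℝ)) ≠ 0 := by linarith
  rw [Pi.div_apply]
  field_simp
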